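/- Let (M,d) be a metric space and S, T: M → M mappings satisfying property (E.A.) such that the pair (S,T) is a ψ-(α,β,γ)-contraction pair. If T(M) is a closed subset of M, then S and T have a unique point of coincidence; that is, there exist u ∈ M and z ∈ M with Su = Tu = z, and whenever Sv = Tv = w for some v ∈ M one has w = z. -/

import Mathlib

open Filter Set Topology

/-- An altering distance function `ψ : [0,∞) → [0,∞)`, modeled as a function on `ℝ`
whose relevant properties are stated on `[0,∞)`. -/
def AlteringDistance (ψ : ℝ → ℝ) : Prop :=
  (∀ t, 0 ≤ t → 0 ≤ ψ t) ∧
  (∀ t, 0 ≤ t → (ψ t = 0 ↔ t = 0)) ∧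
  MonotoneOn ψ (Set.Ici 0) ∧
  ContinuousOn ψ (Set.Ici 0)

/-- Condition (*) on the contractive parameter functions `α, β, γ : [0,∞) → [0,1)`:
`α(t)+β(t)+γ(t) < 1` for all `t ≥ 0`, `limsup_{s→0⁺} γ(s) < 1`, and
`limsup_{s→t⁺} (α(s)+β(s))/(1-γ(s)) < 1` for every `t > 0`. -/
def ParamCondition (α β γ : ℝ → ℝ) : Prop :=
  (∀ t, 0 ≤ t → 0 ≤ α t ∧ α t < 1) ∧
  (∀ t, 0 ≤ t → 0 ≤ β t ∧ β t < 1) ∧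
  (∀ t, 0 ≤ t → 0 ≤ γ t ∧ γ t < 1) ∧
  (∀ t, 0 ≤ t → α t + β t + γ t < 1) ∧
  Filter.limsup γ (𝓝[>] (0:ℝ)) < 1 ∧
  (∀ t : ℝ, 0 < t →
    Filter.limsup (fun s => (α s + β s) / (1 - γ s)) (𝓝[>] t) < 1)

/-- The pair `(S,T)` is a `ψ-(α,β,γ)`-contraction pair. -/
def ContractionPair {M : Type*} [MetricSpace M] (S T : M → M)
    (ψ α β γ : ℝ → ℝ) : Prop :=
  AlteringDistance ψ ∧ ParamCondition α β γ ∧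
  ∀ x y : M,
    ψ (dist (S x) (S y)) ≤
      α (dist (T x) (T y)) * ψ (dist (T x) (T y)) +
      β (dist (T x) (T y)) * ψ (dist (S x) (T x)) +
      γ (dist (T x) (T y)) * ψ (dist (S y) (T y))

/-- If `(S,T)` satisfies property (E.A.), is a `ψ-(α,β,γ)`-contraction pair, and `T(M)` is
closed, then `S` and `T` have a unique point of coincidence. -/
theorem exists_unique_poc_of_EA {M : Type*} [MetricSpace M] (S T : M → M)
    (ψ α β γ : ℝ → ℝ)
    (hEA : ∃ (x : ℕ → M) (t : M),
      Tendsto (fun n => S (x n)) atTop (𝓝 t) ∧ Tendsto (fun n => T (x n)) atTop (𝓝 t))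
    (hST : ContractionPair S T ψ α β γ)
    (hclosed : IsClosed (Set.range T)) :
    ∃ u z : M, S u = z ∧ T u = z ∧
      ∀ v w : M, S v = w → T v = w → w = z := by
  obtain ⟨x, t, hSx, hTx⟩ := hEA
  obtain ⟨⟨hψ0, hψiff, hψmono, hψcont⟩, ⟨hα, hβ, hγ, hsum, hγ0, _⟩, hC⟩ := hST
  have ht : t ∈ Set.range T :=
    hclosed.mem_of_tendsto hTx (Filter.Eventually.of_forall fun n => ⟨x n, rfl⟩)
  obtain ⟨u, hu⟩ := ht
  have hψzero : ψ 0 = 0 := (hψiff 0 le_rfl).mpr rfl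
  set D := dist (S u) (T u) with hDdef
  set L := Filter.limsup γ (𝓝[>] (0:ℝ)) with hL
  have hbdd : Filter.IsBoundedUnder (· ≤ ·) (𝓝[>] (0:ℝ)) γ := by
    refine ⟨1, ?_⟩
    rw [Filter.eventually_map]
    filter_upwards [self_mem_nhdsWithin] with s hs
    exact (hγ s (le_of_lt hs)).2.le
  have hcL : ∀ᶠ s in 𝓝[>] (0:ℝ), γ s < (L+1)/2 :=
    Filter.eventually_lt_of_limsup_lt (by linarith : L < (L+1)/2) hbdd
  set c : ℝ := max ((L+1)/2) (γ 0) with hcdef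
  have hc1 : c < 1 := max_lt (by linarith) (hγ 0 le_rfl).2
  -- eventually γ ≤ c on 𝓝[≥] 0
  have hcev : ∀ᶠ s in 𝓝[Set.Ici (0:ℝ)] 0, γ s ≤ c := by
    have h01 : Set.Ici (0:ℝ) = {0} ∪ Set.Ioi 0 := by
      ext s; simp [le_iff_lt_or_eq, or_comm, eq_comm]
    rw [h01, nhdsWithin_union, eventually_sup]
    constructor
    · rw [nhdsWithin_singleton, eventually_pure]
      exact le_max_right _ _
    · filter_upwards [hcL] with s hs
      exact hs.le.trans (le_max_left _ _)
  have hdn : Tendsto (fun n => dist (T (x n)) (T u)) atTop (𝓝 0) := by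
    have := hTx.dist (tendsto_const_nhds (x := T u))
    simpa [hu] using this
  have hdn' : Tendsto (fun n => dist (T (x n)) (T u)) atTop (𝓝[Set.Ici (0:ℝ)] 0) :=
    tendsto_nhdsWithin_of_tendsto_nhds_of_eventually_within _ hdn
      (Filter.Eventually.of_forall fun n => dist_nonneg)
  have hen : Tendsto (fun n => dist (S (x n)) (T (x n))) atTop (𝓝 0) := by
    have := hSx.dist hTx
    simpa using this
  have hen' : Tendsto (fun n => dist (S (x n)) (T (x n))) atTop (𝓝[Set.Ici (0:ℝ)] 0) :=
    tendsto_nhdsWithin_of_tendsto_nhds_of_eventually_within _ hen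
      (Filter.Eventually.of_forall fun n => dist_nonneg)
  have hsn : Tendsto (fun n => dist (S (x n)) (S u)) atTop (𝓝 D) := by
    have := hSx.dist (tendsto_const_nhds (x := S u))
    have ht' : dist t (S u) = D := by rw [← hu, dist_comm]
    rwa [ht'] at this
  have hsn' : Tendsto (fun n => dist (S (x n)) (S u)) atTop (𝓝[Set.Ici (0:ℝ)] D) :=
    tendsto_nhdsWithin_of_tendsto_nhds_of_eventually_within _ hsn
      (Filter.Eventually.of_forall fun n => dist_nonneg)
  have hψD : 0 ≤ ψ D := hψ0 D dist_nonneg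
  -- convergence of ψ compositions
  have hψdn : Tendsto (fun n => ψ (dist (T (x n)) (T u))) atTop (𝓝 0) := by
    have := (hψcont 0 (Set.self_mem_Ici)).tendsto.comp hdn'
    simpa [hψzero, Function.comp_def] using this
  have hψen : Tendsto (fun n => ψ (dist (S (x n)) (T (x n)))) atTop (𝓝 0) := by
    have := (hψcont 0 (Set.self_mem_Ici)).tendsto.comp hen'
    simpa [hψzero, Function.comp_def] using this
  have hψsn : Tendsto (fun n => ψ (dist (S (x n)) (S u))) atTop (𝓝 (ψ D)) :=
    (hψcont D (Set.mem_Ici.mpr dist_nonneg)).tendsto.comp hsn'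
  -- eventual inequality
  have hineq : ∀ᶠ n in atTop,
      ψ (dist (S (x n)) (S u)) ≤
        ψ (dist (T (x n)) (T u)) + ψ (dist (S (x n)) (T (x n))) + c * ψ D := by
    filter_upwards [hdn'.eventually hcev] with n hγn
    have h := hC (x n) u
    have h1 : α (dist (T (x n)) (T u)) * ψ (dist (T (x n)) (T u)) ≤
        ψ (dist (T (x n)) (T u)) :=
      mul_le_of_le_one_left (hψ0 _ dist_nonneg) (hα _ dist_nonneg).2.le
    have h2 : β (dist (T (x n)) (T u)) * ψ (dist (S (x n)) (T (x n))) ≤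
        ψ (dist (S (x n)) (T (x n))) :=
      mul_le_of_le_one_left (hψ0 _ dist_nonneg) (hβ _ dist_nonneg).2.le
    have h3 : γ (dist (T (x n)) (T u)) * ψ D ≤ c * ψ D :=
      mul_le_mul_of_nonneg_right hγn hψD
    calc ψ (dist (S (x n)) (S u)) ≤ _ := h
      _ ≤ _ := by linarith
  have hkey : ψ D ≤ 0 + 0 + c * ψ D :=
    le_of_tendsto_of_tendsto hψsn ((hψdn.add hψen).add tendsto_const_nhds) hineq
  have hψD0 : ψ D = 0 := by nlinarith
  have hST0 : S u = T u := by
    have : D = 0 := (hψiff D dist_nonneg).mp hψD0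
    exact dist_eq_zero.mp this
  refine ⟨u, S u, rfl, hST0.symm, ?_⟩
  intro v w hSv hTv
  have h := hC u v
  have hd : dist (T u) (T v) = dist (S u) (S v) := by rw [hST0, hSv, hTv]
  rw [← hST0, hSv, hTv] at h
  simp only [dist_self, hψzero, mul_zero, add_zero, zero_add] at h
  have hα1 := (hα (dist (S u) w) dist_nonneg).2
  have hψnn : 0 ≤ ψ (dist (S u) w) := hψ0 _ dist_nonneg
  have : ψ (dist (S u) w) = 0 := by nlinarith
  have := (hψiff _ dist_nonneg).mp this
  rw [dist_comm] at this
  exact dist_eq_zero.mp this
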